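/- Every language accepted by a measure-once quantum finite automaton with bounded error is accepted by a group finite automaton, and conversely every language accepted by a group finite automaton is accepted by a measure-once quantum finite automaton with certainty. -/

import Mathlib

set_option maxHeartbeats 1000000

/-- Configuration of an MO-QFA after reading word `w` from configuration `v`. -/
noncomputable def runVec {n : ℕ} {A : Type} (U : A → Matrix (Fin n) (Fin n) ℂ)
    (v : Fin n → ℂ) (w : List A) : Fin n → ℂ :=
  w.foldl (fun v σ => (U σ).mulVec v) v

/-- Acceptance probability of an MO-QFA with transition matrices `U`, initial state `q0`,
and accepting states `F` on the word `w`: `‖P_F U(w) e_{q0}‖²`. -/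
noncomputable def accProb {n : ℕ} {A : Type} (U : A → Matrix (Fin n) (Fin n) ℂ)
    (q0 : Fin n) (F : Finset (Fin n)) (w : List A) : ℝ :=
  ∑ i ∈ F, ‖runVec U (Pi.single q0 1) w i‖ ^ 2

/-- Extended transition function of a DFA. -/
def dfaEval {Q A : Type} (δ : Q → A → Q) (q : Q) (w : List A) : Q :=
  w.foldl δ q

namespace MOQFA
open Matrix
variable {n : ℕ} {A : Type} {U : A → Matrix (Fin n) (Fin n) ℂ}

theorem runVec_append (v : Fin n → ℂ) (u z : List A) :
    runVec U v (u ++ z) = runVec U (runVec U v u) z := List.foldl_append ..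

theorem runVec_sub (a b : Fin n → ℂ) (z : List A) :
    runVec U (a - b) z = runVec U a z - runVec U b z := by
  induction z generalizing a b with
  | nil => rfl
  | cons σ z ih =>
      simp only [runVec, List.foldl_cons] at *
      rw [Matrix.mulVec_sub]; exact ih _ _

theorem runVec_normsq (hU : ∀ σ, U σ ∈ Matrix.unitaryGroup (Fin n) ℂ) (a : Fin n → ℂ)
    (z : List A) : ∑ i, ‖runVec U a z i‖ ^ 2 = ∑ i, ‖a i‖ ^ 2 := by
  induction z generalizing a with
  | nil => rfl
  | cons σ z ih =>
      simp only [runVec, List.foldl_cons] at *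
      rw [ih]
      have h1 : (U σ)ᴴ * U σ = 1 := Matrix.mem_unitaryGroup_iff'.mp (hU σ)
      have key : ∀ b : Fin n → ℂ, ((∑ i, ‖b i‖ ^ 2 : ℝ) : ℂ) = star b ⬝ᵥ b := by
        intro b
        push_cast
        simp [dotProduct, Pi.star_apply, Complex.star_def, mul_comm,
          Complex.mul_conj, Complex.normSq_eq_norm_sq]
      have : ((∑ i, ‖((U σ).mulVec a) i‖ ^ 2 : ℝ) : ℂ) = ((∑ i, ‖a i‖ ^ 2 : ℝ) : ℂ) := by
        rw [key, key, Matrix.star_mulVec, Matrix.dotProduct_mulVec, Matrix.vecMul_vecMul, h1,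
          Matrix.vecMul_one]
      exact_mod_cast this

lemma abs_sq_sub_sq_le {V : Type*} [NormedAddCommGroup V] (x y : V)
    (hx : ‖x‖ ≤ 1) (hy : ‖y‖ ≤ 1) : |‖x‖ ^ 2 - ‖y‖ ^ 2| ≤ 2 * ‖x - y‖ := by
  have h := abs_norm_sub_norm_le x y
  rw [abs_le] at h ⊢
  constructor <;> nlinarith [norm_nonneg x, norm_nonneg y, norm_nonneg (x - y)]

lemma proj_lip (F : Finset (Fin n)) (a b : Fin n → ℂ)
    (ha : ∑ i, ‖a i‖ ^ 2 = 1) (hb : ∑ i, ‖b i‖ ^ 2 = 1) :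
    |(∑ i ∈ F, ‖a i‖ ^ 2) - ∑ i ∈ F, ‖b i‖ ^ 2| ≤ 2 * Real.sqrt (∑ i, ‖a i - b i‖ ^ 2) := by
  classical
  have hnorm : ∀ v : Fin n → ℂ,
      ‖((WithLp.equiv 2 (Fin n → ℂ)).symm (fun i => if i ∈ F then v i else 0) :
        EuclideanSpace ℂ (Fin n))‖ = Real.sqrt (∑ i ∈ F, ‖v i‖ ^ 2) := by
    intro v
    rw [EuclideanSpace.norm_eq]
    congr 1
    have : ∀ i, ‖((WithLp.equiv 2 (Fin n → ℂ)).symm (fun i => if i ∈ F then v i else 0) :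
        EuclideanSpace ℂ (Fin n)) i‖ ^ 2 = if i ∈ F then ‖v i‖ ^ 2 else 0 := by
      intro i
      simp only [WithLp.equiv_symm_apply, PiLp.toLp_apply]
      by_cases hi : i ∈ F <;> simp [hi]
    simp only [this, Finset.sum_ite_mem, Finset.univ_inter]
  set xa : EuclideanSpace ℂ (Fin n) :=
    (WithLp.equiv 2 (Fin n → ℂ)).symm (fun i => if i ∈ F then a i else 0) with hxa
  set xb : EuclideanSpace ℂ (Fin n) :=
    (WithLp.equiv 2 (Fin n → ℂ)).symm (fun i => if i ∈ F then b i else 0) with hxb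
  have hsum_le : ∀ v : Fin n → ℂ, (∑ i ∈ F, ‖v i‖ ^ 2) ≤ ∑ i, ‖v i‖ ^ 2 :=
    fun v => Finset.sum_le_sum_of_subset_of_nonneg (Finset.subset_univ F)
      (fun i _ _ => by positivity)
  have hna : ‖xa‖ = Real.sqrt (∑ i ∈ F, ‖a i‖ ^ 2) := hnorm a
  have hnb : ‖xb‖ = Real.sqrt (∑ i ∈ F, ‖b i‖ ^ 2) := hnorm b
  have hPa : ‖xa‖ ≤ 1 := by
    rw [hna]; exact Real.sqrt_le_one.mpr (by rw [← ha]; exact hsum_le a)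
  have hPb : ‖xb‖ ≤ 1 := by
    rw [hnb]; exact Real.sqrt_le_one.mpr (by rw [← hb]; exact hsum_le b)
  have hsub : ‖xa - xb‖ ≤ Real.sqrt (∑ i, ‖a i - b i‖ ^ 2) := by
    have hd : xa - xb = (WithLp.equiv 2 (Fin n → ℂ)).symm
        (fun i => if i ∈ F then a i - b i else 0) := by
      apply (WithLp.equiv 2 (Fin n → ℂ)).injective
      ext i
      simp only [hxa, hxb, WithLp.equiv_apply, WithLp.equiv_symm_apply, PiLp.toLp_apply]
      show xa i - xb i = _
      simp only [hxa, hxb, WithLp.equiv_symm_apply, PiLp.toLp_apply]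
      split <;> simp
    rw [hd, EuclideanSpace.norm_eq]
    apply Real.sqrt_le_sqrt
    apply Finset.sum_le_sum
    intro i _
    simp only [WithLp.equiv_symm_apply, PiLp.toLp_apply]
    split
    · exact le_refl _
    · simpa using (by positivity : (0:ℝ) ≤ ‖a i - b i‖ ^ 2)
  have hfa : (∑ i ∈ F, ‖a i‖ ^ 2) = ‖xa‖ ^ 2 := by
    rw [hna, Real.sq_sqrt (by positivity)]
  have hfb : (∑ i ∈ F, ‖b i‖ ^ 2) = ‖xb‖ ^ 2 := by
    rw [hnb, Real.sq_sqrt (by positivity)]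
  rw [hfa, hfb]
  calc |‖xa‖ ^ 2 - ‖xb‖ ^ 2| ≤ 2 * ‖xa - xb‖ := abs_sq_sub_sq_le xa xb hPa hPb
    _ ≤ 2 * Real.sqrt (∑ i, ‖a i - b i‖ ^ 2) := by linarith

end MOQFA

/-- a language accepted by a measure-once QFA with bounded error
(cut-point `lam`, margin `ε > 0`) is accepted by a group finite automaton
(a DFA in which every letter acts as a permutation of the states); conversely any
language accepted by a group finite automaton is accepted by an MO-QFA with certainty
(probability 1 on the language, 0 off it). -/
theorem moqfa_boundedError_iff_groupAutomaton {A : Type} (L : Set (List A)) :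
    ((∃ (n : ℕ) (U : A → Matrix (Fin n) (Fin n) ℂ) (q0 : Fin n) (F : Finset (Fin n))
        (lam ε : ℝ),
        (∀ σ, U σ ∈ Matrix.unitaryGroup (Fin n) ℂ) ∧ 0 < ε ∧
        (∀ w, w ∈ L → lam + ε < accProb U q0 F w) ∧
        (∀ w, w ∉ L → accProb U q0 F w < lam - ε)) →
      ∃ (m : ℕ) (δ : Fin m → A → Fin m) (q0 : Fin m) (F : Set (Fin m)),
        (∀ σ, Function.Bijective fun q => δ q σ) ∧
        (∀ w, w ∈ L ↔ dfaEval δ q0 w ∈ F))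
    ∧
    ((∃ (m : ℕ) (δ : Fin m → A → Fin m) (q0 : Fin m) (F : Set (Fin m)),
        (∀ σ, Function.Bijective fun q => δ q σ) ∧
        (∀ w, w ∈ L ↔ dfaEval δ q0 w ∈ F)) →
      ∃ (n : ℕ) (U : A → Matrix (Fin n) (Fin n) ℂ) (q0 : Fin n) (F : Finset (Fin n)),
        (∀ σ, U σ ∈ Matrix.unitaryGroup (Fin n) ℂ) ∧
        (∀ w, w ∈ L → accProb U q0 F w = 1) ∧
        (∀ w, w ∉ L → accProb U q0 F w = 0)) := by
  constructor
  ·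
    classical
    rintro ⟨n, U, q0, F, lam, ε, hU, hε, hL1, hL2⟩
    set e0 : Fin n → ℂ := Pi.single q0 1 with he0
    have he0n : ∑ i, ‖e0 i‖ ^ 2 = 1 := by
      rw [Finset.sum_eq_single q0]
      · simp [he0]
      · intro b _ hb; simp [he0, Pi.single_apply, hb]
      · simp
    set xE : List A → EuclideanSpace ℂ (Fin n) := fun w => (WithLp.equiv 2 (Fin n → ℂ)).symm (runVec U e0 w) with hxE
    have hnorm1 : ∀ w, ∑ i, ‖runVec U e0 w i‖ ^ 2 = 1 := fun w => by
      rw [MOQFA.runVec_normsq hU, he0n]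
    have hdist : ∀ u v : List A, dist (xE u) (xE v)
        = Real.sqrt (∑ i, ‖runVec U e0 u i - runVec U e0 v i‖ ^ 2) := by
      intro u v
      rw [EuclideanSpace.dist_eq]
      congr 1
      simp only [dist_eq_norm]; rfl
    have hinv : ∀ (u v z : List A), dist (xE (u ++ z)) (xE (v ++ z)) = dist (xE u) (xE v) := by
      intro u v z
      rw [hdist, hdist]
      congr 1
      calc ∑ i, ‖runVec U e0 (u ++ z) i - runVec U e0 (v ++ z) i‖ ^ 2
          = ∑ i, ‖runVec U (runVec U e0 u - runVec U e0 v) z i‖ ^ 2 := by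
            apply Finset.sum_congr rfl
            intro i _
            rw [MOQFA.runVec_append, MOQFA.runVec_append, MOQFA.runVec_sub]
            simp [Pi.sub_apply]
        _ = ∑ i, ‖(runVec U e0 u - runVec U e0 v) i‖ ^ 2 := MOQFA.runVec_normsq hU _ _
        _ = ∑ i, ‖runVec U e0 u i - runVec U e0 v i‖ ^ 2 := by simp [Pi.sub_apply]
    have hacc_close : ∀ u v : List A,
        |accProb U q0 F u - accProb U q0 F v| ≤ 2 * dist (xE u) (xE v) := by
      intro u v
      rw [hdist]
      exact MOQFA.proj_lip F _ _ (hnorm1 u) (hnorm1 v)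
    have hkey : ∀ u v : List A, dist (xE u) (xE v) < ε →
        ∀ z, (u ++ z ∈ L ↔ v ++ z ∈ L) := by
      intro u v hd z
      have h1 : |accProb U q0 F (u ++ z) - accProb U q0 F (v ++ z)|
          ≤ 2 * dist (xE u) (xE v) := by
        rw [← hinv u v z]; exact hacc_close _ _
      have h2 : |accProb U q0 F (u ++ z) - accProb U q0 F (v ++ z)| < 2 * ε :=
        lt_of_le_of_lt h1 (by linarith)
      rw [abs_lt] at h2
      constructor
      · intro hu
        by_contra hv
        have ha := hL1 _ hu
        have hb := hL2 _ hv
        linarith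
      · intro hv
        by_contra hu
        have ha := hL1 _ hv
        have hb := hL2 _ hu
        linarith
    -- the Nerode setoid
    let sE : Setoid (List A) :=
      ⟨fun u v => ∀ z, (u ++ z ∈ L ↔ v ++ z ∈ L),
        ⟨fun u z => Iff.rfl, fun h z => (h z).symm, fun h1 h2 z => (h1 z).trans (h2 z)⟩⟩
    -- total boundedness gives finitely many Nerode classes
    have hball : ∀ w, xE w ∈ Metric.closedBall (0 : EuclideanSpace ℂ (Fin n)) 1 := by
      intro w
      rw [Metric.mem_closedBall, dist_zero_right]
      have : ‖xE w‖ = Real.sqrt (∑ i, ‖runVec U e0 w i‖ ^ 2) := by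
        rw [hxE, EuclideanSpace.norm_eq]; rfl
      rw [this, hnorm1 w, Real.sqrt_one]
    have htb : TotallyBounded (Set.range xE) :=
      (isCompact_closedBall (0 : EuclideanSpace ℂ (Fin n)) 1).totallyBounded.subset
        (Set.range_subset_iff.mpr hball)
    obtain ⟨t, htfin, htsub⟩ := Metric.totallyBounded_iff.mp htb (ε/2) (by linarith)
    have hc0 : ∀ w, ∃ y, y ∈ t ∧ dist (xE w) y < ε/2 := by
      intro w
      have := htsub (Set.mem_range_self w)
      simpa [Metric.mem_ball] using this
    choose c hct hcd using hc0
    have hcc : ∀ u v, c u = c v → sE.r u v := by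
      intro u v h
      apply hkey
      calc dist (xE u) (xE v) ≤ dist (xE u) (c u) + dist (c u) (xE v) := dist_triangle _ _ _
        _ = dist (xE u) (c u) + dist (xE v) (c v) := by rw [h, dist_comm (c v) (xE v)]
        _ < ε/2 + ε/2 := add_lt_add (hcd u) (hcd v)
        _ = ε := by ring
    haveI : Finite t := htfin.to_subtype
    have hQfin : Finite (Quotient sE) := by
      have hg : Function.Surjective (fun y : t =>
          if h : ∃ w, c w = (y : EuclideanSpace ℂ (Fin n)) then Quotient.mk sE h.choose else Quotient.mk sE []) := by
        intro q
        obtain ⟨w, rfl⟩ := Quotient.exists_rep q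
        refine ⟨⟨c w, hct w⟩, ?_⟩
        have hex : ∃ w', c w' = c w := ⟨w, rfl⟩
        simp only [dif_pos hex]
        exact Quotient.sound (hcc _ _ hex.choose_spec)
      exact Finite.of_surjective _ hg
    -- letter action on classes
    have hstep_wd : ∀ (σ : A) (u v : List A), sE.r u v → sE.r (u ++ [σ]) (v ++ [σ]) := by
      intro σ u v h z
      simpa [List.append_assoc] using h ([σ] ++ z)
    let stepQ : A → Quotient sE → Quotient sE := fun σ => Quotient.map (· ++ [σ]) (hstep_wd σ)
    -- pigeonhole: powers of a letter return near the start
    have hrec : ∀ (u v : List A) (σ : A), ∃ d, 1 ≤ d ∧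
        dist (xE (u ++ List.replicate d σ)) (xE u) < ε ∧
        dist (xE (v ++ List.replicate d σ)) (xE v) < ε := by
      intro u v σ
      have hK : IsCompact ((Metric.closedBall (0 : EuclideanSpace ℂ (Fin n)) 1) ×ˢ (Metric.closedBall (0 : EuclideanSpace ℂ (Fin n)) 1)) :=
        (isCompact_closedBall _ _).prod (isCompact_closedBall _ _)
      set seq : ℕ → EuclideanSpace ℂ (Fin n) × EuclideanSpace ℂ (Fin n) := fun k =>
        (xE (u ++ List.replicate k σ), xE (v ++ List.replicate k σ)) with hseqdef
      have hseq : ∀ k, seq k ∈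
          (Metric.closedBall (0 : EuclideanSpace ℂ (Fin n)) 1) ×ˢ (Metric.closedBall (0 : EuclideanSpace ℂ (Fin n)) 1) :=
        fun k => ⟨hball _, hball _⟩
      obtain ⟨p, -, φ, hφ, hconv⟩ := hK.tendsto_subseq hseq
      rw [Metric.tendsto_atTop] at hconv
      obtain ⟨N, hN⟩ := hconv (ε/4) (by linarith)
      have hkl : dist (seq (φ (N+1))) (seq (φ N)) < ε/2 := by
        calc dist (seq (φ (N+1))) (seq (φ N))
            ≤ dist (seq (φ (N+1))) p + dist (seq (φ N)) p := dist_triangle_right _ _ _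
          _ < ε/4 + ε/4 := add_lt_add (hN (N+1) (Nat.le_succ N)) (hN N le_rfl)
          _ = ε/2 := by ring
      have hlt : φ N < φ (N+1) := hφ (Nat.lt_succ_self N)
      refine ⟨φ (N+1) - φ N, by omega, ?_, ?_⟩
      · have hid : u ++ List.replicate (φ (N+1) - φ N) σ ++ List.replicate (φ N) σ
            = u ++ List.replicate (φ (N+1)) σ := by
          rw [List.append_assoc, ← List.replicate_add]
          congr 2
          omega
        have := hinv (u ++ List.replicate (φ (N+1) - φ N) σ) u (List.replicate (φ N) σ)
        rw [hid] at this
        rw [← this]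
        calc dist (xE (u ++ List.replicate (φ (N+1)) σ)) (xE (u ++ List.replicate (φ N) σ))
            ≤ dist (seq (φ (N+1))) (seq (φ N)) := by
              rw [Prod.dist_eq]; exact le_max_left _ _
          _ < ε/2 := hkl
          _ < ε := by linarith
      · have hid : v ++ List.replicate (φ (N+1) - φ N) σ ++ List.replicate (φ N) σ
            = v ++ List.replicate (φ (N+1)) σ := by
          rw [List.append_assoc, ← List.replicate_add]
          congr 2
          omega
        have := hinv (v ++ List.replicate (φ (N+1) - φ N) σ) v (List.replicate (φ N) σ)
        rw [hid] at this
        rw [← this]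
        calc dist (xE (v ++ List.replicate (φ (N+1)) σ)) (xE (v ++ List.replicate (φ N) σ))
            ≤ dist (seq (φ (N+1))) (seq (φ N)) := by
              rw [Prod.dist_eq]; exact le_max_right _ _
          _ < ε/2 := hkl
          _ < ε := by linarith
    -- injectivity of the letter action
    have hinj : ∀ σ, Function.Injective (stepQ σ) := by
      intro σ q1 q2
      refine Quotient.inductionOn₂ q1 q2 ?_
      intro u v h
      have h' : sE.r (u ++ [σ]) (v ++ [σ]) := Quotient.exact h
      obtain ⟨d, hd1, hdu, hdv⟩ := hrec u v σ
      have hu := hkey _ _ hdu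
      have hv := hkey _ _ hdv
      apply Quotient.sound
      intro z
      have hmid : (u ++ List.replicate d σ ++ z ∈ L ↔ v ++ List.replicate d σ ++ z ∈ L) := by
        obtain ⟨d', rfl⟩ : ∃ d', d = d' + 1 := ⟨d - 1, by omega⟩
        have := h' (List.replicate d' σ ++ z)
        simpa [List.replicate_succ, List.append_assoc] using this
      exact ((hu z).symm.trans (hmid.trans (hv z)))
    -- build the automaton on Fin m
    haveI : Fintype (Quotient sE) := Fintype.ofFinite _
    let eQ := Fintype.equivFin (Quotient sE)
    refine ⟨Fintype.card (Quotient sE), fun q σ => eQ (stepQ σ (eQ.symm q)), eQ (Quotient.mk sE []),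
      {q | ∃ w ∈ L, eQ (Quotient.mk sE w) = q}, ?_, ?_⟩
    · intro σ
      have hinj' : Function.Injective (fun q => eQ (stepQ σ (eQ.symm q))) := by
        intro a b hab
        have := hinj σ (eQ.injective hab)
        exact eQ.symm.injective this
      exact Finite.injective_iff_bijective.mp hinj'
    · intro w
      have heval : ∀ (w u : List A),
          dfaEval (fun q σ => eQ (stepQ σ (eQ.symm q))) (eQ (Quotient.mk sE u)) w
            = eQ (Quotient.mk sE (u ++ w)) := by
        intro w
        induction w with
        | nil => intro u; simp [dfaEval]
        | cons σ w ih =>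
            intro u
            show dfaEval _ (eQ (stepQ σ (eQ.symm (eQ (Quotient.mk sE u))))) w = _
            rw [Equiv.symm_apply_apply]
            have hst : stepQ σ (Quotient.mk sE u) = Quotient.mk sE (u ++ [σ]) := rfl
            rw [hst, ih (u ++ [σ])]
            simp
      rw [show dfaEval (fun q σ => eQ (stepQ σ (eQ.symm q))) (eQ (Quotient.mk sE [])) w
        = eQ (Quotient.mk sE ([] ++ w)) from heval w [], List.nil_append]
      constructor
      · intro hw; exact ⟨w, hw, rfl⟩
      · rintro ⟨v, hv, hev⟩
        have hex : sE.r v w := Quotient.exact (eQ.injective hev)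
        have h0 := hex []
        simp only [List.append_nil] at h0
        exact h0.mp hv
  ·
    classical
    rintro ⟨m, δ, q0, F, hbij, hL⟩
    set U : A → Matrix (Fin m) (Fin m) ℂ := fun σ => Matrix.of fun i j => if δ j σ = i then 1 else 0
      with hU
    refine ⟨m, U, q0, (Set.toFinite F).toFinset, ?_, ?_, ?_⟩
    · intro σ
      rw [Matrix.mem_unitaryGroup_iff']
      ext i j
      simp only [hU, Matrix.mul_apply, Matrix.star_apply, Matrix.of_apply, Matrix.one_apply,
        apply_ite (star : ℂ → ℂ), star_one, star_zero, ite_mul, one_mul, zero_mul,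
        Finset.sum_ite_eq, Finset.mem_univ, if_true]
      by_cases h : i = j
      · simp [h]
      · rw [if_neg (fun hh : δ j σ = δ i σ => h ((hbij σ).injective hh).symm), if_neg h]
    all_goals
    · intro w hw
      have hrun : ∀ (w : List A) (q : Fin m),
          runVec U (Pi.single q 1) w = Pi.single (dfaEval δ q w) 1 := by
        intro w
        induction w with
        | nil => intro q; rfl
        | cons σ w ih =>
            intro q
            have hstep : (U σ).mulVec (Pi.single q 1) = Pi.single (δ q σ) 1 := by
              ext i
              rw [Matrix.mulVec_single]
              simp [hU, Pi.single_apply, eq_comm]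
            show runVec U ((U σ).mulVec (Pi.single q 1)) w = _
            rw [hstep]
            exact ih (δ q σ)
      have hpt : ∀ i, ‖runVec U (Pi.single q0 1) w i‖ ^ 2
          = if i = dfaEval δ q0 w then (1:ℝ) else 0 := by
        intro i
        rw [hrun, Pi.single_apply]
        split <;> simp
      have hacc : accProb U q0 (Set.toFinite F).toFinset w
          = if dfaEval δ q0 w ∈ F then 1 else 0 := by
        rw [accProb, Finset.sum_congr rfl fun i _ => hpt i,
          Finset.sum_ite_eq' ((Set.toFinite F).toFinset) (dfaEval δ q0 w) (fun _ => (1:ℝ))]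
        simp [Set.Finite.mem_toFinset]
      rw [hacc]
      first
        | rw [if_pos ((hL w).mp hw)]
        | rw [if_neg (fun hc => hw ((hL w).mpr hc))]
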